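/- arXiv:1703.00539 — 2 statements merged into one kernel-verified Lean document; each statement's English description precedes it below -/
import Mathlib

section
/- Let G = ([N], E) be a chordal graph with a perfect elimination ordering v_1, ..., v_N. For each vertex v_i that has a neighbor of larger index, let i* = min{ j : j > i, {v_i, v_j} ∈ E }. Then the edge set E' = { {v_i, v_{i*}} : v_i has a neighbor of larger index } forms a spanning forest of G with N − κ(G) edges. -/
open SimpleGraph Walk

private lemma reach_aux {N : ℕ} (G : SimpleGraph (Fin N))
    (hPEO : ∀ i j k : Fin N, i < j → i < k → j ≠ k → G.Adj i j → G.Adj i k → G.Adj j k) :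
    ∀ n : ℕ, ∀ i m : Fin N, i < m → ∀ p : G.Walk i m, p.length ≤ n →
      ∃ j, i < j ∧ G.Adj i j := by
  intro n
  induction n using Nat.strong_induction_on with
  | _ n ih =>
    intro i m him p0 hlen0
    obtain ⟨p, hppath, hlen⟩ : ∃ p : G.Walk i m, p.IsPath ∧ p.length ≤ n :=
      ⟨p0.bypass, p0.bypass_isPath, le_trans p0.length_bypass_le hlen0⟩
    clear p0 hlen0
    have hne : (p.support.toFinset : Finset (Fin N)).Nonempty :=
      ⟨i, by simp⟩
    obtain ⟨v, hvdef⟩ : ∃ v, v = p.support.toFinset.min' hne := ⟨_, rfl⟩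
    have hv : v ∈ p.support := by
      have := p.support.toFinset.min'_mem hne
      rw [← hvdef] at this; simpa using this
    have hvmin : ∀ x ∈ p.support, v ≤ x := by
      intro x hx
      rw [hvdef]
      exact p.support.toFinset.min'_le x (by simpa using hx)
    by_cases hvi : v = i
    · have hnn : i ≠ m := him.ne
      obtain ⟨x, hx, q, rfl⟩ := Walk.exists_eq_cons_of_ne hnn p
      have hxi : x ≠ i := by
        have := hppath.support_nodup
        simp only [Walk.support_cons, List.nodup_cons] at this
        intro h; exact this.1 (h ▸ q.start_mem_support)
      have : i ≤ x := hvi ▸ hvmin x (by simp [Walk.support_cons])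
      exact ⟨x, lt_of_le_of_ne this (Ne.symm hxi), hx⟩
    · have hvm : v ≠ m := by
        have : v ≤ i := hvmin i p.start_mem_support
        exact ne_of_lt (lt_of_le_of_lt this him)
      have hsplit : (p.takeUntil v hv).append (p.dropUntil v hv) = p := p.take_spec hv
      obtain ⟨a0, ha0, t0, ht0⟩ := Walk.exists_eq_cons_of_ne (Ne.symm hvi) (p.takeUntil v hv)
      obtain ⟨a, t', ha, hteq⟩ := Walk.exists_cons_eq_concat ha0 t0
      have hteq' : p.takeUntil v hv = t'.concat ha := ht0.trans hteq
      obtain ⟨b, hb, d', hdeq⟩ := Walk.exists_eq_cons_of_ne hvm (p.dropUntil v hv)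
      have hav : a ≠ v := ha.ne
      have hbv : b ≠ v := (G.ne_of_adj hb).symm
      have hasupp : a ∈ p.support := by
        rw [← hsplit, Walk.support_append]
        refine List.mem_append.2 (Or.inl ?_)
        rw [hteq']
        simp [Walk.concat_eq_append, Walk.support_append]
      have hbsupp : b ∈ p.support := by
        rw [← hsplit, Walk.support_append]
        refine List.mem_append.2 (Or.inr ?_)
        rw [hdeq]
        simp [Walk.support_cons]
      have hva : v < a := lt_of_le_of_ne (hvmin a hasupp) (Ne.symm hav)
      have hvb : v < b := lt_of_le_of_ne (hvmin b hbsupp) (Ne.symm hbv)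
      have hab : a ≠ b := by
        have hnd := hppath.support_nodup
        rw [← hsplit, Walk.support_append, hteq', hdeq] at hnd
        have hdisj := (List.nodup_append'.mp hnd).2.2
        intro h
        refine hdisj (a := a) ?_ ?_
        · simp [Walk.concat_eq_append, Walk.support_append]
        · rw [h]; simp [Walk.support_cons]
      have hadjab : G.Adj a b := hPEO v a b hva hvb hab ha.symm hb
      have hlt : (t'.append (Walk.cons hadjab d')).length < n := by
        have h1 : (t'.append (Walk.cons hadjab d')).length + 1 < p.length + 1 := by
          rw [← hsplit, Walk.length_append, hteq', hdeq]
          simp [Walk.length_concat, Walk.length_append, Walk.length_cons]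
        omega
      exact ih _ hlt i m him (t'.append (Walk.cons hadjab d')) le_rfl

private lemma reach_lemma {N : ℕ} (G : SimpleGraph (Fin N))
    (hPEO : ∀ i j k : Fin N, i < j → i < k → j ≠ k → G.Adj i j → G.Adj i k → G.Adj j k)
    {i m : Fin N} (him : i < m) (h : G.Reachable i m) : ∃ j, i < j ∧ G.Adj i j := by
  obtain ⟨p⟩ := h
  exact reach_aux G hPEO p.length i m him p le_rfl

/-- Given a perfect elimination ordering of a chordal graph (here the identity ordering on
`Fin N`), the edges from each vertex to its smallest later neighbor form a spanning forest
with `N - κ(G)` edges. -/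
theorem stmt_2 {N : ℕ} (G : SimpleGraph (Fin N)) [DecidableRel G.Adj]
    (hPEO : ∀ i j k : Fin N, i < j → i < k → j ≠ k → G.Adj i j → G.Adj i k → G.Adj j k) :
    ∀ E' : Set (Sym2 (Fin N)),
      E' = {s | ∃ i j : Fin N, s = s(i, j) ∧ G.Adj i j ∧ i < j ∧
        ∀ k : Fin N, i < k → G.Adj i k → j ≤ k} →
      (SimpleGraph.fromEdgeSet E').IsAcyclic ∧ SimpleGraph.fromEdgeSet E' ≤ G ∧
        E'.ncard = N - Fintype.card G.ConnectedComponent := by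
  intro E' hE'
  subst hE'
  classical
  set E' : Set (Sym2 (Fin N)) := {s | ∃ i j : Fin N, s = s(i, j) ∧ G.Adj i j ∧ i < j ∧
        ∀ k : Fin N, i < k → G.Adj i k → j ≤ k} with hE'
  set H := SimpleGraph.fromEdgeSet E' with hH
  -- key unpacking lemma
  have key : ∀ x y : Fin N, s(x, y) ∈ E' → x < y →
      G.Adj x y ∧ ∀ k : Fin N, x < k → G.Adj x k → y ≤ k := by
    intro x y hs hxy
    obtain ⟨i, j, hsij, hadj, hij, hmin⟩ := hs
    rw [Sym2.eq_iff] at hsij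
    rcases hsij with ⟨rfl, rfl⟩ | ⟨rfl, rfl⟩
    · exact ⟨hadj, hmin⟩
    · exact absurd hxy (lt_asymm hij)
  have keyH : ∀ x y : Fin N, H.Adj x y → x < y →
      G.Adj x y ∧ ∀ k : Fin N, x < k → G.Adj x k → y ≤ k := by
    intro x y hxy hlt
    rw [hH, SimpleGraph.fromEdgeSet_adj] at hxy
    exact key x y hxy.1 hlt
  refine ⟨?_, ?_, ?_⟩
  · -- acyclicity
    intro v p hp
    have hne : (p.support.toFinset : Finset (Fin N)).Nonempty := ⟨v, by simp⟩
    obtain ⟨mv, hmvdef⟩ : ∃ mv, mv = p.support.toFinset.min' hne := ⟨_, rfl⟩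
    have hmv : mv ∈ p.support := by
      have := p.support.toFinset.min'_mem hne
      rw [← hmvdef] at this; simpa using this
    have hmvmin : ∀ x ∈ p.support, mv ≤ x := by
      intro x hx
      rw [hmvdef]
      exact p.support.toFinset.min'_le x (by simpa using hx)
    have hc : (p.rotate mv hmv).IsCycle := hp.rotate hmv
    have hsubs : ∀ y ∈ (p.rotate mv hmv).support, y ∈ p.support := by
      intro y hy
      rw [(p.rotate mv hmv).support_eq_cons] at hy
      rcases List.mem_cons.mp hy with rfl | hy
      · exact hmv
      · have hperm := (p.support_rotate mv hmv).perm
        have : y ∈ p.support.tail := hperm.mem_iff.mp hy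
        rw [p.support_eq_cons]
        exact List.mem_cons.2 (Or.inr this)
    obtain ⟨x, hx, q, hq⟩ := Walk.not_nil_iff.mp hc.not_nil
    have hcyc2 := hq ▸ hc
    rw [Walk.cons_isCycle_iff] at hcyc2
    obtain ⟨hqpath, hqe⟩ := hcyc2
    have hxm : x ≠ mv := hx.ne'
    obtain ⟨b0, hb0, q0, hq0⟩ := Walk.exists_eq_cons_of_ne hxm q
    obtain ⟨a, r, ha, hqeq⟩ := Walk.exists_cons_eq_concat hb0 q0
    have hqeq' : q = r.concat ha := hq0.trans hqeq
    -- last edge of q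
    have hlast : s(a, mv) ∈ q.edges := by
      rw [hqeq', Walk.edges_concat]
      simp
    have hax : a ≠ x := by
      intro h
      subst h
      exact hqe (by rwa [Sym2.eq_swap] at hlast)
    -- memberships
    have hxsupp : x ∈ p.support := by
      apply hsubs
      rw [hq, Walk.support_cons]
      exact List.mem_cons.2 (Or.inr q.start_mem_support)
    have hasupp : a ∈ p.support := by
      apply hsubs
      rw [hq, Walk.support_cons]
      refine List.mem_cons.2 (Or.inr ?_)
      rw [hqeq', Walk.support_concat]
      exact List.mem_append.2 (Or.inl r.end_mem_support)
    have hmx : mv < x := lt_of_le_of_ne (hmvmin x hxsupp) (Ne.symm hxm)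
    have hma : mv < a := lt_of_le_of_ne (hmvmin a hasupp) (Ne.symm ha.ne)
    have h1 := keyH mv x hx hmx
    have h2 := keyH mv a ha.symm hma
    exact hax (le_antisymm (h2.2 x hmx h1.1) (h1.2 a hma h2.1))
  · -- H ≤ G
    intro a b hab
    rw [hH, SimpleGraph.fromEdgeSet_adj] at hab
    obtain ⟨⟨i, j, hsij, hadj, _, _⟩, hne⟩ := hab
    rw [Sym2.eq_iff] at hsij
    rcases hsij with ⟨rfl, rfl⟩ | ⟨rfl, rfl⟩
    · exact hadj
    · exact hadj.symm
  · -- cardinality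
    -- sinks
    set T : Finset (Fin N) := Finset.univ.filter (fun i => ∀ j, i < j → ¬ G.Adj i j) with hT
    -- bijection sinks ↔ components
    have hbij : Function.Bijective (fun i : T => G.connectedComponentMk i.1) := by
      constructor
      · rintro ⟨i, hi⟩ ⟨i', hi'⟩ h
        simp only [Subtype.mk_eq_mk]
        simp only [ConnectedComponent.eq] at h
        rw [hT, Finset.mem_filter] at hi hi'
        by_contra hne
        rcases lt_or_gt_of_ne (fun hh : i = i' => hne (by simpa using hh)) with hlt | hlt
        · obtain ⟨j, hj1, hj2⟩ := reach_lemma G hPEO hlt h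
          exact hi.2 j hj1 hj2
        · obtain ⟨j, hj1, hj2⟩ := reach_lemma G hPEO hlt h.symm
          exact hi'.2 j hj1 hj2
      · intro c
        obtain ⟨w, rfl⟩ := c.exists_rep
        have hFne : (Finset.univ.filter
            (fun x => G.connectedComponentMk x = G.connectedComponentMk w)).Nonempty :=
          ⟨w, Finset.mem_filter.2 ⟨Finset.mem_univ _, rfl⟩⟩
        set F := Finset.univ.filter
            (fun x => G.connectedComponentMk x = G.connectedComponentMk w) with hF
        have hmmem := Finset.mem_filter.mp (F.max'_mem hFne)
        have hsink : F.max' hFne ∈ T := by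
          rw [hT, Finset.mem_filter]
          refine ⟨Finset.mem_univ _, ?_⟩
          intro j hj hadj
          have hjF : j ∈ F := by
            refine Finset.mem_filter.mpr ⟨Finset.mem_univ _, ?_⟩
            rw [← hmmem.2]
            exact ConnectedComponent.sound hadj.symm.reachable
          exact absurd (F.le_max' j hjF) (not_le.mpr hj)
        exact ⟨⟨F.max' hFne, hsink⟩, hmmem.2⟩
    have hcard : Fintype.card G.ConnectedComponent = T.card := by
      rw [← Fintype.card_coe T]
      exact (Fintype.card_of_bijective hbij).symm
    -- E' as an image
    set nxt : Fin N → Fin N := fun i =>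
      if h : (Finset.univ.filter (fun j => i < j ∧ G.Adj i j)).Nonempty then
        (Finset.univ.filter (fun j => i < j ∧ G.Adj i j)).min' h else i with hnxt
    have hnsink : ∀ i : Fin N, i ∈ (Tᶜ : Finset (Fin N)) →
        (i < nxt i ∧ G.Adj i (nxt i)) ∧ ∀ k, i < k → G.Adj i k → nxt i ≤ k := by
      intro i hi
      rw [Finset.mem_compl, hT, Finset.mem_filter] at hi
      push_neg at hi
      obtain ⟨j, hj1, hj2⟩ := hi (Finset.mem_univ i)
      have hne : (Finset.univ.filter (fun j => i < j ∧ G.Adj i j)).Nonempty :=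
        ⟨j, by simp [hj1, hj2]⟩
      have hmem := (Finset.univ.filter (fun j => i < j ∧ G.Adj i j)).min'_mem hne
      rw [Finset.mem_filter] at hmem
      constructor
      · rw [hnxt]; simp only [hne, dif_pos]
        exact hmem.2
      · intro k hk1 hk2
        rw [hnxt]; simp only [hne, dif_pos]
        exact Finset.min'_le _ k (by simp [hk1, hk2])
    have himg : E' = (fun i => s(i, nxt i)) '' ((Tᶜ : Finset (Fin N)) : Set (Fin N)) := by
      ext s
      constructor
      · rintro ⟨i, j, rfl, hadj, hij, hmin⟩
        have hiT : i ∈ (Tᶜ : Finset (Fin N)) := by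
          rw [Finset.mem_compl, hT, Finset.mem_filter]
          push_neg
          exact fun _ => ⟨j, hij, hadj⟩
        obtain ⟨⟨h1, h2⟩, h3⟩ := hnsink i hiT
        have : j = nxt i := le_antisymm (hmin (nxt i) h1 h2) (h3 j hij hadj)
        exact ⟨i, by simpa using hiT, by rw [this]⟩
      · rintro ⟨i, hi, rfl⟩
        obtain ⟨⟨h1, h2⟩, h3⟩ := hnsink i (by simpa using hi)
        exact ⟨i, nxt i, rfl, h2, h1, h3⟩
    have hinj : Set.InjOn (fun i => s(i, nxt i)) ((Tᶜ : Finset (Fin N)) : Set (Fin N)) := by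
      intro i hi i' hi' h
      obtain ⟨⟨h1, _⟩, _⟩ := hnsink i (by simpa using hi)
      obtain ⟨⟨h1', _⟩, _⟩ := hnsink i' (by simpa using hi')
      simp only [Sym2.eq_iff] at h
      rcases h with ⟨h, _⟩ | ⟨ha, hb⟩
      · exact h
      · exfalso
        rw [← ha] at h1'
        rw [hb] at h1
        exact absurd (h1.trans h1') (lt_irrefl i)
    rw [himg, Set.ncard_image_of_injOn hinj, Set.ncard_coe_finset, Finset.card_compl,
      hcard, Fintype.card_fin]
end

section
/- Let G = ([ℓ], E) be the cycle graph on ℓ ≥ 3 vertices and let K be a real symmetric ℓ×ℓ matrix whose induced graph is G (i.e., K_{i,j} ≠ 0 exactly when {i,j} ∈ E or i = j). Then det(K) = Σ_{M ∈ M(G)} (−1)^{|M|} Π_{{i,j} ∈ M} K_{i,j}² · Π_{i ∉ V(M)} K_{i,i} + 2·(−1)^{ℓ+1}·Π_{{i,j} ∈ E} K_{i,j}, where M(G) is the set of matchings of G and V(M) the set of vertices covered by M. -/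
open Finset

/-- The edges of the cycle graph on `Fin ℓ`, as ordered pairs `(i, j)` with `i < j`. -/
def cycleEdges (ℓ : ℕ) : Finset (Fin ℓ × Fin ℓ) :=
  univ.filter (fun p => p.1 < p.2 ∧
    (((p.1 : ℕ) + 1) % ℓ = (p.2 : ℕ) ∨ ((p.2 : ℕ) + 1) % ℓ = (p.1 : ℕ)))

/-- The matchings of the cycle graph on `Fin ℓ`: sets of pairwise vertex-disjoint edges. -/
def cycleMatchings (ℓ : ℕ) : Finset (Finset (Fin ℓ × Fin ℓ)) :=
  (cycleEdges ℓ).powerset.filter (fun M =>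
    ∀ p ∈ M, ∀ q ∈ M, p ≠ q → p.1 ≠ q.1 ∧ p.1 ≠ q.2 ∧ p.2 ≠ q.1 ∧ p.2 ≠ q.2)

/-- The vertices covered by a matching. -/
def coveredVerts {ℓ : ℕ} (M : Finset (Fin ℓ × Fin ℓ)) : Finset (Fin ℓ) :=
  M.biUnion (fun p => {p.1, p.2})

namespace Stmt9Aux

/-- Adjacency in the cycle graph. -/
def Adj (ℓ : ℕ) (i j : Fin ℓ) : Prop :=
  ((i : ℕ) + 1) % ℓ = (j : ℕ) ∨ ((j : ℕ) + 1) % ℓ = (i : ℕ)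

instance (ℓ : ℕ) (i j : Fin ℓ) : Decidable (Adj ℓ i j) :=
  inferInstanceAs (Decidable (_ ∨ _))

variable {ℓ : ℕ}

lemma adj_symm {i j : Fin ℓ} (h : Adj ℓ i j) : Adj ℓ j i := h.symm

lemma val_add_one [NeZero ℓ] (hℓ : 3 ≤ ℓ) (i : Fin ℓ) :
    ((i + 1 : Fin ℓ) : ℕ) = ((i : ℕ) + 1) % ℓ := by
  simp [Fin.add_def, Fin.val_one', Nat.mod_mod_of_dvd]

lemma adj_iff [NeZero ℓ] (hℓ : 3 ≤ ℓ) (i j : Fin ℓ) :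
    Adj ℓ i j ↔ i + 1 = j ∨ j + 1 = i := by
  unfold Adj
  rw [← val_add_one hℓ i, ← val_add_one hℓ j, Fin.val_eq_val, Fin.val_eq_val]

lemma add_one_ne [NeZero ℓ] (hℓ : 3 ≤ ℓ) (i : Fin ℓ) : i + 1 ≠ i := by
  intro h
  have h2 := congrArg Fin.val h
  rw [val_add_one hℓ] at h2
  have hi := i.isLt
  rcases Nat.lt_or_ge ((i : ℕ) + 1) ℓ with h3 | h3
  · rw [Nat.mod_eq_of_lt h3] at h2; omega
  · have he : (i : ℕ) + 1 = ℓ := by omega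
    rw [he, Nat.mod_self] at h2; omega

lemma add_two_ne [NeZero ℓ] (hℓ : 3 ≤ ℓ) (i : Fin ℓ) : i + 1 + 1 ≠ i := by
  intro h
  have h2 := congrArg Fin.val h
  rw [val_add_one hℓ (i + 1), val_add_one hℓ i] at h2
  have hi := i.isLt
  rcases Nat.lt_or_ge ((i : ℕ) + 1) ℓ with h3 | h3
  · rw [Nat.mod_eq_of_lt h3] at h2
    rcases Nat.lt_or_ge ((i : ℕ) + 2) ℓ with h4 | h4
    · rw [Nat.mod_eq_of_lt h4] at h2; omega
    · have he : (i : ℕ) + 2 = ℓ := by omega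
      rw [show (i:ℕ) + 1 + 1 = (i:ℕ) + 2 by ring, he, Nat.mod_self] at h2; omega
  · have he : (i : ℕ) + 1 = ℓ := by omega
    rw [he, Nat.mod_self, Nat.zero_add, Nat.mod_eq_of_lt (by omega)] at h2; omega

lemma rot_apply [NeZero ℓ] (hℓ : 3 ≤ ℓ) (j : Fin ℓ) : finRotate ℓ j = j + 1 := by
  rcases ℓ with _ | m
  · omega
  · exact finRotate_succ_apply j

open Fin.NatCast in
/-- The ascent lemma : an edge-respecting permutation that moves two consecutive
vertices forward is the rotation. -/
lemma ascend [NeZero ℓ] (hℓ : 3 ≤ ℓ) {σ : Equiv.Perm (Fin ℓ)}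
    (hσ : ∀ i, σ i ≠ i → Adj ℓ (σ i) i) {i : Fin ℓ}
    (h1 : σ i = i + 1) (h2 : σ (i + 1) = i + 1 + 1) : σ = finRotate ℓ := by
  have main : ∀ k : ℕ, σ (i + (k : Fin ℓ)) = i + (k : Fin ℓ) + 1 ∧
      σ (i + (k : Fin ℓ) + 1) = i + (k : Fin ℓ) + 1 + 1 := by
    intro k
    induction k with
    | zero => simpa using ⟨h1, h2⟩
    | succ k ih =>
      obtain ⟨ha, hb⟩ := ih
      set a := i + (k : Fin ℓ) with hadef
      have hcast : ((k + 1 : ℕ) : Fin ℓ) = (k : Fin ℓ) + 1 := by push_cast; ring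
      have hrw : i + ((k + 1 : ℕ) : Fin ℓ) = a + 1 := by rw [hcast, hadef, add_assoc]
      rw [hrw]
      refine ⟨hb, ?_⟩
      have hne : σ (a + 1 + 1) ≠ a + 1 + 1 := by
        intro h
        have : σ (a + 1) = σ (a + 1 + 1) := by rw [hb, h]
        exact add_one_ne hℓ (a + 1) (σ.injective this).symm
      rcases (adj_iff hℓ _ _).mp (hσ _ hne) with h3 | h3
      · exfalso
        have h4 : σ (a + 1 + 1) = a + 1 := by
          have := add_right_cancel (h3.trans (rfl : a + 1 + 1 = (a + 1) + 1))
          exact this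
        have : σ a = σ (a + 1 + 1) := by rw [ha, h4]
        exact add_two_ne hℓ a (σ.injective this).symm
      · exact h3.symm
  have hall : ∀ j : Fin ℓ, σ j = j + 1 := by
    intro j
    have h := (main ((j - i).val)).1
    have e : i + (((j - i).val : ℕ) : Fin ℓ) = j := by
      rw [Fin.cast_val_eq_self]; abel
    rwa [e] at h
  exact Equiv.ext fun j => (hall j).trans (rot_apply hℓ j).symm

lemma inv_edge {σ : Equiv.Perm (Fin ℓ)}
    (hσ : ∀ i, σ i ≠ i → Adj ℓ (σ i) i) :
    ∀ i, σ⁻¹ i ≠ i → Adj ℓ (σ⁻¹ i) i := by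
  intro i h
  have h' : σ (σ⁻¹ i) ≠ σ⁻¹ i := by
    rw [← Equiv.Perm.mul_apply, mul_inv_cancel, Equiv.Perm.one_apply]
    exact fun e => h e.symm
  have := hσ _ h'
  rw [← Equiv.Perm.mul_apply, mul_inv_cancel, Equiv.Perm.one_apply] at this
  exact adj_symm this

/-- Classification : a non-involutive edge-respecting permutation is a rotation. -/
lemma classify [NeZero ℓ] (hℓ : 3 ≤ ℓ) {σ : Equiv.Perm (Fin ℓ)}
    (hσ : ∀ i, σ i ≠ i → Adj ℓ (σ i) i)
    (hni : σ * σ ≠ 1) : σ = finRotate ℓ ∨ σ = (finRotate ℓ)⁻¹ := by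
  have : ∃ i, σ (σ i) ≠ i := by
    by_contra h
    push_neg at h
    exact hni (Equiv.ext fun x => h x)
  obtain ⟨i, hi⟩ := this
  have hmove : σ i ≠ i := fun h => hi (by rw [h, h])
  rcases (adj_iff hℓ _ _).mp (hσ i hmove) with h1 | h1
  · -- σ i + 1 = i, use the inverse
    right
    have hτ := inv_edge hσ
    have ht1 : σ⁻¹ (σ i) = σ i + 1 := by
      rw [← Equiv.Perm.mul_apply, inv_mul_cancel, Equiv.Perm.one_apply, h1]
    have ht2 : σ⁻¹ (σ i + 1) = σ i + 1 + 1 := by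
      rw [h1]
      -- σ i + 1 = i so σ i + 1 + 1 = i + 1
      have hmove' : σ⁻¹ i ≠ i := fun h => hmove (by
        have h5 := congrArg σ h
        rw [← Equiv.Perm.mul_apply, mul_inv_cancel, Equiv.Perm.one_apply] at h5
        exact h5.symm)
      rcases (adj_iff hℓ _ _).mp (hτ i hmove') with h2 | h2
      · exfalso
        -- σ⁻¹ i + 1 = i = σ i + 1, so σ⁻¹ i = σ i, so i = σ (σ i)
        have : σ⁻¹ i = σ i := add_right_cancel (h2.trans h1.symm)
        have := congrArg σ this
        rw [← Equiv.Perm.mul_apply, mul_inv_cancel, Equiv.Perm.one_apply] at this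
        exact hi this.symm
      · exact h2.symm
    have := ascend hℓ hτ ht1 ht2
    rw [← this, inv_inv]
  · -- i + 1 = σ i
    left
    have h2 : σ (i + 1) = i + 1 + 1 := by
      rw [h1]
      have hne : σ (σ i) ≠ σ i := by
        intro h
        exact hmove (σ.injective h)
      rcases (adj_iff hℓ _ _).mp (hσ _ hne) with h3 | h3
      · exact absurd (add_right_cancel (h3.trans h1.symm)) hi
      · exact h3.symm
    exact ascend hℓ hσ h1.symm h2

/-- The matching associated to an involution. -/
def Mof (σ : Equiv.Perm (Fin ℓ)) : Finset (Fin ℓ × Fin ℓ) :=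
  univ.filter (fun p => p.1 < p.2 ∧ σ p.1 = p.2)

lemma mem_Mof {σ : Equiv.Perm (Fin ℓ)} {p : Fin ℓ × Fin ℓ} :
    p ∈ Mof σ ↔ p.1 < p.2 ∧ σ p.1 = p.2 := by
  simp [Mof]

lemma Mof_inj {σ τ : Equiv.Perm (Fin ℓ)}
    (hσ : ∀ x, σ (σ x) = x) (hτ : ∀ x, τ (τ x) = x)
    (h : Mof σ = Mof τ) : σ = τ := by
  have claim : ∀ (σ' τ' : Equiv.Perm (Fin ℓ)), (∀ x, σ' (σ' x) = x) → (∀ x, τ' (τ' x) = x) →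
      Mof σ' = Mof τ' → ∀ i, σ' i ≠ i → τ' i = σ' i := by
    intro σ' τ' hσ' hτ' h' i hi
    rcases lt_or_gt_of_ne hi with hlt | hlt
    ·
      -- hlt : σ' i < i
      have hp : (σ' i, i) ∈ Mof σ' := mem_Mof.mpr ⟨hlt, hσ' i⟩
      rw [h'] at hp
      have h2 : τ' (σ' i) = i := (mem_Mof.mp hp).2
      have h3 := congrArg τ' h2
      rw [hτ'] at h3
      exact h3.symm
    · have hp : (i, σ' i) ∈ Mof σ' := mem_Mof.mpr ⟨hlt, rfl⟩
      rw [h'] at hp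
      exact (mem_Mof.mp hp).2
  apply Equiv.ext
  intro i
  by_cases h1 : σ i = i
  · by_cases h2 : τ i = i
    · rw [h1, h2]
    · exact claim τ σ hτ hσ h.symm i h2
  · exact (claim σ τ hσ hτ h i h1).symm


lemma mem_coveredVerts {M : Finset (Fin ℓ × Fin ℓ)} {i : Fin ℓ} :
    i ∈ coveredVerts M ↔ ∃ q ∈ M, i = q.1 ∨ i = q.2 := by
  simp [coveredVerts]

/-- For an involutive, edge-respecting permutation, `Mof σ` is a matching. -/
lemma Mof_mem [NeZero ℓ] (hℓ : 3 ≤ ℓ) {σ : Equiv.Perm (Fin ℓ)}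
    (hedge : ∀ i, σ i ≠ i → Adj ℓ (σ i) i) (hinv : ∀ x, σ (σ x) = x) :
    Mof σ ∈ cycleMatchings ℓ := by
  rw [cycleMatchings, mem_filter, mem_powerset]
  constructor
  · intro q hq
    obtain ⟨hlt, he⟩ := mem_Mof.mp hq
    rw [cycleEdges, mem_filter]
    refine ⟨mem_univ _, hlt, ?_⟩
    have hne : σ q.1 ≠ q.1 := by rw [he]; exact (ne_of_lt hlt).symm
    have := hedge q.1 hne
    rw [he] at this
    exact this.symm
  · intro p hp q hq hpq
    obtain ⟨hplt, hpe⟩ := mem_Mof.mp hp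
    obtain ⟨hqlt, hqe⟩ := mem_Mof.mp hq
    refine ⟨?_, ?_, ?_, ?_⟩
    · intro h
      exact hpq (Prod.ext h (by rw [← hpe, ← hqe, h]))
    · intro h
      have h2 : σ q.2 = q.1 := by rw [← hqe, hinv]
      have h3 : p.2 = q.1 := by rw [← hpe, h, h2]
      exact lt_irrefl q.1
        (lt_trans (lt_of_lt_of_eq hqlt h.symm) (lt_of_lt_of_eq hplt h3))
    · intro h
      have h2 : σ p.2 = p.1 := by rw [← hpe, hinv]
      have h3 : q.2 = p.1 := by rw [← hqe, ← h, h2]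
      exact lt_irrefl p.1
        (lt_trans (lt_of_lt_of_eq hplt h) (lt_of_lt_of_eq hqlt h3))
    · intro h
      rw [← hpe, ← hqe] at h
      exact hpq (Prod.ext (σ.injective h) (by rw [← hpe, ← hqe, σ.injective h]))

/-- Construction of the involution attached to a matching, with all its properties. -/
lemma key [NeZero ℓ] (hℓ : 3 ≤ ℓ) (K : Matrix (Fin ℓ) (Fin ℓ) ℝ) (hK : K.IsSymm)
    (M : Finset (Fin ℓ × Fin ℓ)) :
    M ⊆ cycleEdges ℓ →
    (∀ p ∈ M, ∀ q ∈ M, p ≠ q → p.1 ≠ q.1 ∧ p.1 ≠ q.2 ∧ p.2 ≠ q.1 ∧ p.2 ≠ q.2) →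
    ∃ σ : Equiv.Perm (Fin ℓ),
      (∀ x, σ (σ x) = x) ∧ (∀ i, σ i ≠ i → Adj ℓ (σ i) i) ∧ Mof σ = M ∧
      (∀ i, i ∉ coveredVerts M → σ i = i) ∧
      Equiv.Perm.sign σ = (-1) ^ M.card ∧
      ∏ i ∈ coveredVerts M, K (σ i) i = ∏ p ∈ M, (K p.1 p.2) ^ 2 := by
  induction M using Finset.induction_on with
  | empty =>
    intro _ _
    refine ⟨1, by simp, by simp, ?_, by simp [coveredVerts], by simp, by simp [coveredVerts]⟩
    ext q
    simp only [mem_Mof, Equiv.Perm.one_apply, Finset.notMem_empty, iff_false]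
    rintro ⟨h1, h2⟩
    exact absurd h2 (ne_of_lt h1)
  | @insert p M hpM ih =>
    intro hsub hdisj
    have hsubM : M ⊆ cycleEdges ℓ := fun q hq => hsub (mem_insert_of_mem hq)
    have hdisjM : ∀ p' ∈ M, ∀ q ∈ M, p' ≠ q →
        p'.1 ≠ q.1 ∧ p'.1 ≠ q.2 ∧ p'.2 ≠ q.1 ∧ p'.2 ≠ q.2 :=
      fun p' hp' q hq => hdisj p' (mem_insert_of_mem hp') q (mem_insert_of_mem hq)
    obtain ⟨σ, hinv, hedge, hMof, hfix, hsign, hprod⟩ := ih hsubM hdisjM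
    have hpe : p ∈ cycleEdges ℓ := hsub (mem_insert_self _ _)
    rw [cycleEdges, mem_filter] at hpe
    obtain ⟨-, hplt, hpadj'⟩ := hpe
    have hpadj : Adj ℓ p.2 p.1 := hpadj'.symm
    have hp12 : p.1 ≠ p.2 := ne_of_lt hplt
    have hpM' : ∀ q ∈ M, p.1 ≠ q.1 ∧ p.1 ≠ q.2 ∧ p.2 ≠ q.1 ∧ p.2 ≠ q.2 := by
      intro q hq
      exact hdisj p (mem_insert_self _ _) q (mem_insert_of_mem hq)
        (fun e => hpM (e ▸ hq))
    have hcov1 : p.1 ∉ coveredVerts M := by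
      rw [mem_coveredVerts]
      rintro ⟨q, hq, h | h⟩
      · exact (hpM' q hq).1 h
      · exact (hpM' q hq).2.1 h
    have hcov2 : p.2 ∉ coveredVerts M := by
      rw [mem_coveredVerts]
      rintro ⟨q, hq, h | h⟩
      · exact (hpM' q hq).2.2.1 h
      · exact (hpM' q hq).2.2.2 h
    have hσp1 : σ p.1 = p.1 := hfix _ hcov1
    have hσp2 : σ p.2 = p.2 := hfix _ hcov2
    have hmapcov : ∀ i, σ i ≠ i → i ∈ coveredVerts M := by
      intro i hi
      by_contra h
      exact hi (hfix i h)
    have hcovmap : ∀ i ∈ coveredVerts M, σ i ∈ coveredVerts M := by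
      intro i hi
      obtain ⟨q, hq, h | h⟩ := mem_coveredVerts.mp hi
      · have : σ q.1 = q.2 := (mem_Mof.mp (hMof ▸ hq)).2
        rw [h, this]
        exact mem_coveredVerts.mpr ⟨q, hq, Or.inr rfl⟩
      · have h2 : σ q.1 = q.2 := (mem_Mof.mp (hMof ▸ hq)).2
        have : σ q.2 = q.1 := by rw [← h2, hinv]
        rw [h, this]
        exact mem_coveredVerts.mpr ⟨q, hq, Or.inl rfl⟩
    have hnotp : ∀ i ∈ coveredVerts M, i ≠ p.1 ∧ i ≠ p.2 := by
      intro i hi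
      obtain ⟨q, hq, h | h⟩ := mem_coveredVerts.mp hi
      · exact ⟨fun e => ((hpM' q hq).1 (by rw [← e]; exact h)).elim,
          fun e => ((hpM' q hq).2.2.1 (by rw [← e]; exact h)).elim⟩
      · exact ⟨fun e => ((hpM' q hq).2.1 (by rw [← e]; exact h)).elim,
          fun e => ((hpM' q hq).2.2.2 (by rw [← e]; exact h)).elim⟩
    have hσavoid : ∀ i, i ≠ p.1 → i ≠ p.2 → σ i ≠ p.1 ∧ σ i ≠ p.2 := by
      intro i h1 h2
      by_cases hm : σ i = i
      · rw [hm]; exact ⟨h1, h2⟩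
      · exact hnotp _ (hcovmap i (hmapcov i hm))
    set τ : Equiv.Perm (Fin ℓ) := Equiv.swap p.1 p.2 * σ with hτdef
    have hτ1 : τ p.1 = p.2 := by
      simp [hτdef, Equiv.Perm.mul_apply, hσp1, Equiv.swap_apply_left]
    have hτ2 : τ p.2 = p.1 := by
      simp [hτdef, Equiv.Perm.mul_apply, hσp2, Equiv.swap_apply_right]
    have hτo : ∀ i, i ≠ p.1 → i ≠ p.2 → τ i = σ i := by
      intro i h1 h2
      obtain ⟨ha, hb⟩ := hσavoid i h1 h2
      simp only [hτdef, Equiv.Perm.mul_apply]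
      exact Equiv.swap_apply_of_ne_of_ne ha hb
    have hcovins : coveredVerts (insert p M) = {p.1, p.2} ∪ coveredVerts M := by
      rw [coveredVerts, Finset.biUnion_insert]; rfl
    refine ⟨τ, ?_, ?_, ?_, ?_, ?_, ?_⟩
    · -- involution
      intro x
      by_cases h1 : x = p.1
      · rw [h1, hτ1, hτ2]
      · by_cases h2 : x = p.2
        · rw [h2, hτ2, hτ1]
        · obtain ⟨ha, hb⟩ := hσavoid x h1 h2
          rw [hτo x h1 h2, hτo _ ha hb, hinv]
    · -- edge property
      intro i hi
      by_cases h1 : i = p.1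
      · rw [h1, hτ1]; exact hpadj
      · by_cases h2 : i = p.2
        · rw [h2, hτ2]; exact adj_symm hpadj
        · rw [hτo i h1 h2] at hi ⊢
          exact hedge i hi
    · -- Mof τ = insert p M
      ext q
      rw [mem_Mof, Finset.mem_insert]
      constructor
      · rintro ⟨hlt, he⟩
        by_cases h1 : q.1 = p.1
        · left
          refine Prod.ext h1 ?_
          rw [← he, h1, hτ1]
        · by_cases h2 : q.1 = p.2
          · exfalso
            rw [h2, hτ2] at he
            exact lt_irrefl q.1
              (lt_trans (lt_of_lt_of_eq hlt he.symm) (lt_of_lt_of_eq hplt h2.symm))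
          · right
            rw [hτo _ h1 h2] at he
            rw [← hMof, mem_Mof]
            exact ⟨hlt, he⟩
      · rintro (rfl | hq)
        · exact ⟨hplt, hτ1⟩
        · have hq' := mem_Mof.mp (hMof ▸ hq)
          have hc1 : q.1 ∈ coveredVerts M := mem_coveredVerts.mpr ⟨q, hq, Or.inl rfl⟩
          obtain ⟨hn1, hn2⟩ := hnotp _ hc1
          exact ⟨hq'.1, by rw [hτo _ hn1 hn2]; exact hq'.2⟩
    · -- fixes uncovered
      intro i hi
      rw [hcovins, Finset.mem_union, Finset.mem_insert, Finset.mem_singleton] at hi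
      push_neg at hi
      obtain ⟨⟨h1, h2⟩, h3⟩ := hi
      rw [hτo i h1 h2]
      exact hfix i h3
    · -- sign
      rw [hτdef, map_mul, Equiv.Perm.sign_swap hp12, hsign,
        Finset.card_insert_of_notMem hpM, pow_succ]
      exact mul_comm _ _
    · -- product
      rw [hcovins]
      have hdisj2 : Disjoint ({p.1, p.2} : Finset (Fin ℓ)) (coveredVerts M) := by
        rw [Finset.disjoint_left]
        intro a ha hb
        rw [Finset.mem_insert, Finset.mem_singleton] at ha
        obtain ⟨hn1, hn2⟩ := hnotp a hb
        rcases ha with rfl | rfl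
        · exact hn1 rfl
        · exact hn2 rfl
      rw [Finset.prod_union hdisj2, Finset.prod_insert (by simpa using hp12),
        Finset.prod_singleton, hτ1, hτ2]
      have hrest : ∏ i ∈ coveredVerts M, K (τ i) i = ∏ i ∈ coveredVerts M, K (σ i) i := by
        apply Finset.prod_congr rfl
        intro i hi
        obtain ⟨h1, h2⟩ := hnotp i hi
        rw [hτo i h1 h2]
      rw [hrest, hprod, Finset.prod_insert hpM, hK.apply p.2 p.1]
      ring


/-- The product over the cycle edges equals the product along the rotation. -/
lemma prod_edges [NeZero ℓ] (hℓ : 3 ≤ ℓ) (K : Matrix (Fin ℓ) (Fin ℓ) ℝ) (hK : K.IsSymm) :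
    ∏ i : Fin ℓ, K (finRotate ℓ i) i = ∏ p ∈ cycleEdges ℓ, K p.1 p.2 := by
  have hlast : ∀ i : Fin ℓ, ¬ ((i : ℕ) + 1 < ℓ) → ((i + 1 : Fin ℓ) : ℕ) = 0 ∧ (i : ℕ) = ℓ - 1 := by
    intro i h
    have hi := i.isLt
    have he : (i : ℕ) + 1 = ℓ := by omega
    rw [val_add_one hℓ, he, Nat.mod_self]
    omega
  have hsmall : ∀ i : Fin ℓ, ((i : ℕ) + 1 < ℓ) → ((i + 1 : Fin ℓ) : ℕ) = (i : ℕ) + 1 := by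
    intro i h
    rw [val_add_one hℓ, Nat.mod_eq_of_lt h]
  apply Finset.prod_nbij'
    (i := fun i : Fin ℓ => if (i : ℕ) + 1 < ℓ then (i, i + 1) else (i + 1, i))
    (j := fun p : Fin ℓ × Fin ℓ => if ((p.1 : ℕ) + 1) % ℓ = (p.2 : ℕ) then p.1 else p.2)
  · intro i _
    by_cases h : (i : ℕ) + 1 < ℓ
    · have : (if (i : ℕ) + 1 < ℓ then (i, i + 1) else (i + 1, i)) = (i, i + 1) := if_pos h
      rw [this, cycleEdges, mem_filter]
      refine ⟨mem_univ _, ?_, Or.inl ?_⟩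
      · show i < i + 1
        rw [Fin.lt_def, hsmall i h]
        omega
      · show ((i : ℕ) + 1) % ℓ = ((i + 1 : Fin ℓ) : ℕ)
        rw [hsmall i h, Nat.mod_eq_of_lt h]
    · obtain ⟨h0, hl⟩ := hlast i h
      have : (if (i : ℕ) + 1 < ℓ then (i, i + 1) else (i + 1, i)) = (i + 1, i) := if_neg h
      rw [this, cycleEdges, mem_filter]
      refine ⟨mem_univ _, ?_, Or.inr ?_⟩
      · show i + 1 < i
        rw [Fin.lt_def, h0]
        omega
      · show ((i : ℕ) + 1) % ℓ = ((i + 1 : Fin ℓ) : ℕ)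
        rw [h0, hl, Nat.sub_add_cancel (by omega), Nat.mod_self]
  · intro p _
    exact mem_univ _
  · intro i _
    by_cases h : (i : ℕ) + 1 < ℓ
    · have e1 : (if (i : ℕ) + 1 < ℓ then (i, i + 1) else (i + 1, i)) = (i, i + 1) := if_pos h
      show (fun p : Fin ℓ × Fin ℓ => if ((p.1 : ℕ) + 1) % ℓ = (p.2 : ℕ) then p.1 else p.2)
        (if (i : ℕ) + 1 < ℓ then (i, i + 1) else (i + 1, i)) = i
      rw [e1]
      show (if ((i : ℕ) + 1) % ℓ = ((i + 1 : Fin ℓ) : ℕ) then i else i + 1) = i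
      rw [if_pos (by rw [hsmall i h, Nat.mod_eq_of_lt h])]
    · obtain ⟨h0, hl⟩ := hlast i h
      have e1 : (if (i : ℕ) + 1 < ℓ then (i, i + 1) else (i + 1, i)) = (i + 1, i) := if_neg h
      show (fun p : Fin ℓ × Fin ℓ => if ((p.1 : ℕ) + 1) % ℓ = (p.2 : ℕ) then p.1 else p.2)
        (if (i : ℕ) + 1 < ℓ then (i, i + 1) else (i + 1, i)) = i
      rw [e1]
      show (if (((i + 1 : Fin ℓ) : ℕ) + 1) % ℓ = (i : ℕ) then i + 1 else i) = i
      rw [if_neg (by rw [h0, Nat.mod_eq_of_lt (by omega)]; omega)]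
  · intro p hp
    rw [cycleEdges, mem_filter] at hp
    obtain ⟨-, hplt, hadj⟩ := hp
    rw [Fin.lt_def] at hplt
    by_cases hc : ((p.1 : ℕ) + 1) % ℓ = (p.2 : ℕ)
    · have e1 : (if ((p.1 : ℕ) + 1) % ℓ = (p.2 : ℕ) then p.1 else p.2) = p.1 := if_pos hc
      show (fun i : Fin ℓ => if (i : ℕ) + 1 < ℓ then (i, i + 1) else (i + 1, i))
        (if ((p.1 : ℕ) + 1) % ℓ = (p.2 : ℕ) then p.1 else p.2) = p
      rw [e1]
      have h1 : (p.1 : ℕ) + 1 < ℓ := by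
        rcases Nat.lt_or_ge ((p.1 : ℕ) + 1) ℓ with h | h
        · exact h
        · exfalso
          have he : (p.1 : ℕ) + 1 = ℓ := by have := p.1.isLt; omega
          rw [he, Nat.mod_self] at hc
          omega
      show (if (p.1 : ℕ) + 1 < ℓ then (p.1, p.1 + 1) else (p.1 + 1, p.1)) = p
      rw [if_pos h1]
      have h2 : (p.1 : ℕ) + 1 = (p.2 : ℕ) := by rw [← hc, Nat.mod_eq_of_lt h1]
      exact Prod.ext rfl (Fin.ext (by rw [hsmall _ h1, h2]))
    · have e1 : (if ((p.1 : ℕ) + 1) % ℓ = (p.2 : ℕ) then p.1 else p.2) = p.2 := if_neg hc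
      show (fun i : Fin ℓ => if (i : ℕ) + 1 < ℓ then (i, i + 1) else (i + 1, i))
        (if ((p.1 : ℕ) + 1) % ℓ = (p.2 : ℕ) then p.1 else p.2) = p
      rw [e1]
      have h2 : ((p.2 : ℕ) + 1) % ℓ = (p.1 : ℕ) := hadj.resolve_left hc
      have h3 : ¬ ((p.2 : ℕ) + 1 < ℓ) := by
        intro h
        rw [Nat.mod_eq_of_lt h] at h2
        omega
      obtain ⟨h0, hl⟩ := hlast p.2 h3
      show (if (p.2 : ℕ) + 1 < ℓ then (p.2, p.2 + 1) else (p.2 + 1, p.2)) = p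
      rw [if_neg h3]
      have hp2 : (p.2 : ℕ) + 1 = ℓ := by have := p.2.isLt; omega
      have : ((p.2 + 1 : Fin ℓ) : ℕ) = (p.1 : ℕ) := by
        rw [h0, ← h2, hp2, Nat.mod_self]
      exact Prod.ext (Fin.ext this) rfl
  · intro i _
    rw [rot_apply hℓ i]
    by_cases h : (i : ℕ) + 1 < ℓ
    · have e1 : (if (i : ℕ) + 1 < ℓ then (i, i + 1) else (i + 1, i)) = (i, i + 1) := if_pos h
      show K (i + 1) i =
        ((fun p : Fin ℓ × Fin ℓ => K p.1 p.2)
          (if (i : ℕ) + 1 < ℓ then (i, i + 1) else (i + 1, i)))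
      rw [e1]
      exact hK.apply i (i + 1)
    · have e1 : (if (i : ℕ) + 1 < ℓ then (i, i + 1) else (i + 1, i)) = (i + 1, i) := if_neg h
      show K (i + 1) i =
        ((fun p : Fin ℓ × Fin ℓ => K p.1 p.2)
          (if (i : ℕ) + 1 < ℓ then (i, i + 1) else (i + 1, i)))
      rw [e1]

end Stmt9Aux

open Stmt9Aux in
/-- Determinant of a symmetric matrix supported on a cycle graph, decomposed into its
matching contributions plus the two full-cycle permutations. -/
theorem stmt_9 (ℓ : ℕ) (hℓ : 3 ≤ ℓ) (K : Matrix (Fin ℓ) (Fin ℓ) ℝ) (hK : K.IsSymm)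
    (hsupp : ∀ i j : Fin ℓ, i ≠ j → (K i j ≠ 0 ↔
      (((i : ℕ) + 1) % ℓ = (j : ℕ) ∨ ((j : ℕ) + 1) % ℓ = (i : ℕ)))) :
    K.det = (∑ M ∈ cycleMatchings ℓ, (-1 : ℝ) ^ M.card *
        (∏ p ∈ M, (K p.1 p.2) ^ 2) * ∏ i ∈ univ \ coveredVerts M, K i i) +
      2 * (-1 : ℝ) ^ (ℓ + 1) * ∏ p ∈ cycleEdges ℓ, K p.1 p.2 := by
  haveI : NeZero ℓ := ⟨by omega⟩
  classical
  set rot : Equiv.Perm (Fin ℓ) := finRotate ℓ with hrotdef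
  set S : Finset (Equiv.Perm (Fin ℓ)) :=
    univ.filter (fun σ => ∀ i, σ i ≠ i → Adj ℓ (σ i) i) with hSdef
  set T : Finset (Equiv.Perm (Fin ℓ)) := S.filter (fun σ => σ * σ = 1) with hTdef
  have hmemS : ∀ σ : Equiv.Perm (Fin ℓ), σ ∈ S ↔ ∀ i, σ i ≠ i → Adj ℓ (σ i) i := by
    intro σ
    rw [hSdef, mem_filter]
    simp
  -- Step 1: reduce the determinant to a sum over edge-respecting permutations
  have h1 : K.det = ∑ σ ∈ S, ((Equiv.Perm.sign σ : ℤ) : ℝ) * ∏ i, K (σ i) i := by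
    rw [Matrix.det_apply]
    rw [← Finset.sum_subset (Finset.subset_univ S) ?van]
    case van =>
      intro σ _ hσ
      rw [hmemS] at hσ
      push_neg at hσ
      obtain ⟨i, hne, hna⟩ := hσ
      have h0 : K (σ i) i = 0 := by
        by_contra h0
        exact hna ((hsupp (σ i) i hne).mp h0)
      rw [show (∏ i, K (σ i) i) = 0 from Finset.prod_eq_zero (mem_univ i) h0, smul_zero]
    apply Finset.sum_congr rfl
    intro σ _
    simp [Units.smul_def, zsmul_eq_mul]
  -- Facts about the rotation
  have hrotS : rot ∈ S := by
    rw [hmemS]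
    intro i _
    rw [hrotdef, rot_apply hℓ i]
    exact Or.inr (val_add_one hℓ i).symm
  have hrotinvS : rot⁻¹ ∈ S := by
    rw [hmemS]
    exact inv_edge ((hmemS rot).mp hrotS)
  have hrr : rot * rot ≠ 1 := by
    intro h
    have h0 : rot (rot 0) = 0 := by
      rw [← Equiv.Perm.mul_apply, h, Equiv.Perm.one_apply]
    rw [hrotdef, rot_apply hℓ, rot_apply hℓ] at h0
    exact add_two_ne hℓ 0 h0
  have hrotne : rot ≠ rot⁻¹ := by
    intro h
    apply hrr
    calc rot * rot = rot * rot⁻¹ := by rw [← h]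
    _ = 1 := by simp
  have hrotnT : rot ∉ T := by
    rw [hTdef, mem_filter]
    exact fun h => hrr h.2
  have hrotinvnT : rot⁻¹ ∉ T := by
    rw [hTdef, mem_filter]
    rintro ⟨-, h⟩
    apply hrr
    have := congrArg Inv.inv h
    rw [mul_inv_rev, inv_inv, inv_one] at this
    exact this
  -- Step 2: split into involutions and the two rotations
  have hsplit : S = T ∪ {rot, rot⁻¹} := by
    ext σ
    constructor
    · intro hσ
      by_cases hinv : σ * σ = 1
      · exact Finset.mem_union_left _ (by rw [hTdef, mem_filter]; exact ⟨hσ, hinv⟩)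
      · apply Finset.mem_union_right
        rcases classify hℓ ((hmemS σ).mp hσ) hinv with h | h
        · rw [h]; exact Finset.mem_insert_self _ _
        · rw [h]; exact Finset.mem_insert_of_mem (Finset.mem_singleton_self _)
    · intro h
      rcases Finset.mem_union.mp h with h | h
      · exact Finset.filter_subset _ _ h
      · rcases Finset.mem_insert.mp h with rfl | h
        · exact hrotS
        · rw [Finset.mem_singleton.mp h]
          exact hrotinvS
  have hdisj : Disjoint T ({rot, rot⁻¹} : Finset (Equiv.Perm (Fin ℓ))) := by
    rw [Finset.disjoint_right]
    intro σ hσ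
    rcases Finset.mem_insert.mp hσ with rfl | h
    · exact hrotnT
    · rw [Finset.mem_singleton.mp h]
      exact hrotinvnT
  rw [h1, hsplit, Finset.sum_union hdisj, Finset.sum_pair hrotne]
  -- Step 3: the involution sum equals the matching sum
  have hmatch : ∑ σ ∈ T, ((Equiv.Perm.sign σ : ℤ) : ℝ) * ∏ i, K (σ i) i =
      ∑ M ∈ cycleMatchings ℓ, (-1 : ℝ) ^ M.card *
        (∏ p ∈ M, (K p.1 p.2) ^ 2) * ∏ i ∈ univ \ coveredVerts M, K i i := by
    have hTprops : ∀ σ ∈ T, (∀ i, σ i ≠ i → Adj ℓ (σ i) i) ∧ (∀ x, σ (σ x) = x) := by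
      intro σ hσ
      rw [hTdef, mem_filter] at hσ
      refine ⟨(hmemS σ).mp hσ.1, fun x => ?_⟩
      rw [← Equiv.Perm.mul_apply, hσ.2, Equiv.Perm.one_apply]
    apply Finset.sum_bij (fun σ _ => Mof σ)
    · intro σ hσ
      obtain ⟨he, hi⟩ := hTprops σ hσ
      exact Mof_mem hℓ he hi
    · intro σ1 h1 σ2 h2 he
      exact Mof_inj (hTprops σ1 h1).2 (hTprops σ2 h2).2 he
    · intro M hM
      rw [cycleMatchings, mem_filter, mem_powerset] at hM
      obtain ⟨σ, hinv, hedge, hMof, hfix, hsign, hprod⟩ :=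
        key hℓ K hK M hM.1 hM.2
      refine ⟨σ, ?_, hMof⟩
      rw [hTdef, mem_filter]
      exact ⟨(hmemS σ).mpr hedge, Equiv.ext fun x => by
        rw [Equiv.Perm.mul_apply, hinv, Equiv.Perm.one_apply]⟩
    · intro σ hσ
      obtain ⟨hedge0, hinv0⟩ := hTprops σ hσ
      have hmm := Mof_mem hℓ hedge0 hinv0
      rw [cycleMatchings, mem_filter, mem_powerset] at hmm
      obtain ⟨σ', hinv', hedge', hMof', hfix', hsign', hprod'⟩ :=
        key hℓ K hK (Mof σ) hmm.1 hmm.2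
      have heq : σ' = σ := Mof_inj hinv' hinv0 hMof'
      subst heq
      rw [← hMof'] at hfix' hsign' hprod' ⊢
      have hsc : ((Equiv.Perm.sign σ' : ℤ) : ℝ) = (-1 : ℝ) ^ (Mof σ').card := by
        rw [hsign']
        push_cast
        ring
      have hps : (∏ i, K (σ' i) i) =
          (∏ i ∈ univ \ coveredVerts (Mof σ'), K i i) *
            ∏ p ∈ Mof σ', (K p.1 p.2) ^ 2 := by
        rw [← Finset.prod_sdiff (Finset.subset_univ (coveredVerts (Mof σ'))), hprod']
        congr 1
        apply Finset.prod_congr rfl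
        intro i hi
        rw [hfix' i (Finset.mem_sdiff.mp hi).2]
      rw [hsc, hps]
      ring
  rw [hmatch]
  -- Step 4: the two rotation terms
  have hsignrot : ((Equiv.Perm.sign rot : ℤ) : ℝ) = (-1 : ℝ) ^ (ℓ + 1) := by
    rw [hrotdef]
    rcases ℓ with _ | m
    · omega
    · rw [sign_finRotate]
      push_cast
      rw [pow_succ, pow_succ]
      ring
  have hprodrot : (∏ i, K (rot i) i) = ∏ p ∈ cycleEdges ℓ, K p.1 p.2 := by
    rw [hrotdef]
    exact prod_edges hℓ K hK
  have hsigninv : ((Equiv.Perm.sign rot⁻¹ : ℤ) : ℝ) = (-1 : ℝ) ^ (ℓ + 1) := by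
    rw [Equiv.Perm.sign_inv]
    exact hsignrot
  have hprodinv : (∏ i, K (rot⁻¹ i) i) = ∏ p ∈ cycleEdges ℓ, K p.1 p.2 := by
    have hc : (∏ i, K (rot⁻¹ i) i) = ∏ i, K i (rot i) := by
      rw [← Equiv.prod_comp rot (fun i => K (rot⁻¹ i) i)]
      apply Finset.prod_congr rfl
      intro i _
      rw [← Equiv.Perm.mul_apply, inv_mul_cancel, Equiv.Perm.one_apply]
    rw [hc, ← hprodrot]
    apply Finset.prod_congr rfl
    intro i _
    exact (hK.apply i (rot i)).symm
  rw [hsignrot, hprodrot, hsigninv, hprodinv]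
  ring
end
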